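/- arXiv:1307.6174 — 4 statements merged into one kernel-verified Lean document; each statement's English description precedes it below -/
import Mathlib

section
/- Let K be a field, let E be an elliptic curve over K (a Weierstrass curve with nonzero discriminant), and let P be a K-rational point of E of finite order N with N ≥ 4. Then there exist b, c ∈ K and an isomorphism of elliptic curves over K from E to the curve E(b,c) given by y² + (1−c)xy − by = x³ − bx² which maps P to the point (0, 0). -/
/-- The Kubert-Tate normal form curve E(b,c) : y^2 + (1-c)xy - by = x^3 - bx^2. -/
def Ebc {K : Type*} [CommRing K] (b c : K) : WeierstrassCurve.Affine K :=
  { a₁ := 1 - c, a₂ := -b, a₃ := -b, a₄ := 0, a₆ := 0 }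
open Classical in
/-- Kubert's theorem: an elliptic curve with a rational point of order N ≥ 4 admits an
admissible change of Weierstrass coordinates putting it in Kubert-Tate normal form E(b,c),
with the point sent to (0,0).  The change of coordinates sends an affine point (x, y) to
((x - r) / u², (y - s(x - r) - t) / u³). -/
theorem stmt_0 {K : Type*} [Field K] (W : WeierstrassCurve.Affine K) (hΔ : W.Δ ≠ 0)
    (P : W.Point) (N : ℕ) (hN : 4 ≤ N) (hP : addOrderOf P = N) :
    ∃ (b c : K) (C : WeierstrassCurve.VariableChange K) (x y : K) (h : W.Nonsingular x y),
      P = WeierstrassCurve.Affine.Point.some x y h ∧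
      C • W = Ebc b c ∧
      (x - C.r) / (C.u : K) ^ 2 = 0 ∧
      (y - C.s * (x - C.r) - C.t) / (C.u : K) ^ 3 = 0 := by
  classical
  have hsmul : ∀ n : ℕ, 0 < n → n < 4 → n • P ≠ 0 := by
    intro n hn hn4 h0
    have hdvd : addOrderOf P ∣ n := addOrderOf_dvd_of_nsmul_eq_zero h0
    rw [hP] at hdvd
    exact absurd (Nat.le_of_dvd hn hdvd) (by omega)
  have hP1 : P ≠ 0 := by
    intro h0
    exact hsmul 1 one_pos (by omega) (by rw [one_nsmul, h0])
  obtain ⟨x₀, y₀, h, rfl⟩ :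
      ∃ (x y : K) (h : W.Nonsingular x y), P = WeierstrassCurve.Affine.Point.some _ _ h := by
    cases P with
    | zero => exact absurd rfl hP1
    | some _ _ h => exact ⟨_, _, h, rfl⟩
  -- the point is not 2-torsion
  have hy : y₀ ≠ W.negY x₀ y₀ := by
    intro hy
    apply hsmul 2 two_pos (by omega)
    rw [two_nsmul, WeierstrassCurve.Affine.Point.add_self_of_Y_eq hy]
  obtain ⟨l, hl⟩ : ∃ l, l = W.slope x₀ x₀ y₀ y₀ := ⟨_, rfl⟩
  have hA₃ : y₀ - W.negY x₀ y₀ ≠ 0 := sub_ne_zero.mpr hy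
  obtain ⟨A, hA⟩ : ∃ A : K, A = 2 * y₀ + W.a₁ * x₀ + W.a₃ := ⟨_, rfl⟩
  have hAne : A ≠ 0 := by
    rw [hA]
    have : y₀ - W.negY x₀ y₀ = 2 * y₀ + W.a₁ * x₀ + W.a₃ := by
      rw [WeierstrassCurve.Affine.negY]; ring
    rw [← this]; exact hA₃
  have hslope : l * A = 3 * x₀ ^ 2 + 2 * W.a₂ * x₀ + W.a₄ - W.a₁ * y₀ := by
    have hAeq : y₀ - W.negY x₀ y₀ = A := by
      rw [hA, WeierstrassCurve.Affine.negY]; ring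
    rw [hl, WeierstrassCurve.Affine.slope_of_Y_ne rfl hy, hAeq, div_mul_cancel₀ _ hAne]
  have h2P : (2 : ℕ) • WeierstrassCurve.Affine.Point.some _ _ h =
      WeierstrassCurve.Affine.Point.some _ _
        (WeierstrassCurve.Affine.nonsingular_add h h fun hxy => hy hxy.2) := by
    rw [two_nsmul, WeierstrassCurve.Affine.Point.add_self_of_Y_ne hy]
  -- x-coordinate of 2P differs from x₀
  have hx2 : W.addX x₀ x₀ (W.slope x₀ x₀ y₀ y₀) ≠ x₀ := by
    intro hx
    have heq2 := (WeierstrassCurve.Affine.nonsingular_add h h fun hxy => hy hxy.2).1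
    rcases WeierstrassCurve.Affine.Y_eq_of_X_eq heq2 h.1 hx with hy2 | hy2
    · -- 2P = P, so P = 0
      apply hP1
      have h2 : WeierstrassCurve.Affine.Point.some _ _ h + WeierstrassCurve.Affine.Point.some _ _ h =
          WeierstrassCurve.Affine.Point.some _ _ h := by
        rw [← two_nsmul, h2P, WeierstrassCurve.Affine.Point.some.injEq]
        exact ⟨hx, hy2⟩
      exact add_right_cancel (a := WeierstrassCurve.Affine.Point.some _ _ h)
        (b := WeierstrassCurve.Affine.Point.some _ _ h) (c := 0) (by rw [zero_add]; exact h2)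
    · -- 2P = -P, so 3P = 0
      apply hsmul 3 (by omega) (by omega)
      have h2 : (2 : ℕ) • WeierstrassCurve.Affine.Point.some _ _ h =
          -WeierstrassCurve.Affine.Point.some _ _ h := by
        rw [h2P, WeierstrassCurve.Affine.Point.neg_some,
          WeierstrassCurve.Affine.Point.some.injEq]
        exact ⟨hx, hy2⟩
      have h3 : (3 : ℕ) • WeierstrassCurve.Affine.Point.some _ _ h =
          (2 : ℕ) • WeierstrassCurve.Affine.Point.some _ _ h
            + WeierstrassCurve.Affine.Point.some _ _ h := by
        rw [succ_nsmul]
      rw [h3, h2, neg_add_cancel]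
  -- the key quantities
  obtain ⟨d, hd⟩ : ∃ d : K, d = W.a₂ - l * W.a₁ + 3 * x₀ - l ^ 2 := ⟨_, rfl⟩
  have hdne : d ≠ 0 := by
    have : x₀ - W.addX x₀ x₀ (W.slope x₀ x₀ y₀ y₀) = d := by
      rw [hd, WeierstrassCurve.Affine.addX, hl]; ring
    rw [← this]
    exact sub_ne_zero.mpr (Ne.symm hx2)
  obtain ⟨u, hu⟩ : ∃ u : K, u = A / d := ⟨_, rfl⟩
  have hune : u ≠ 0 := by rw [hu]; exact div_ne_zero hAne hdne
  have hud : u * d = A := by rw [hu, div_mul_cancel₀ _ hdne]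
  have heq : y₀ ^ 2 + W.a₁ * x₀ * y₀ + W.a₃ * y₀
      = x₀ ^ 3 + W.a₂ * x₀ ^ 2 + W.a₄ * x₀ + W.a₆ :=
    (WeierstrassCurve.Affine.equation_iff (W := W) x₀ y₀).mp h.1
  refine ⟨-(d / u ^ 2), 1 - (W.a₁ + 2 * l) / u, ⟨Units.mk0 u hune, x₀, l, y₀⟩, x₀, y₀, h,
    rfl, ?_, by simp, by simp⟩
  ext <;>
    simp only [WeierstrassCurve.variableChange_def, Ebc, Units.val_inv_eq_inv_val, Units.val_mk0] <;>
    field_simp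
  · ring
  · linear_combination -hd
  · linear_combination -hA - hud
  · linear_combination l * hA - hslope
  · linear_combination -heq
end

section
/- Let K be a field and b, c ∈ K such that the Kubert-Tate curve E(b,c) has nonzero discriminant. Then in the group of K-rational points of E(b,c), one has 2·(0,0) = (b, bc) and 3·(0,0) = (c, b−c). -/
/-- The point `(0, 0)` on `E(b,c)`, which is nonsingular since the discriminant is nonzero. -/
noncomputable def P₀ {K : Type*} [Field K] (b c : K) (hΔ : (Ebc b c).Δ ≠ 0) :
    (Ebc b c).Point :=
  .some _ _ (((Ebc b c).equation_iff_nonsingular_of_Δ_ne_zero hΔ).mp ((Ebc b c).equation_zero.mpr rfl))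

lemma some_congr {F : Type*} [Field F] {W : WeierstrassCurve.Affine F} {x₁ y₁ x₂ y₂ : F}
    {h₁ : W.Nonsingular x₁ y₁} {h₂ : W.Nonsingular x₂ y₂} (hx : x₁ = x₂) (hy : y₁ = y₂) :
    WeierstrassCurve.Affine.Point.some _ _ h₁ = .some _ _ h₂ := by
  subst hx; subst hy; rfl

open Classical in
theorem stmt_2 {K : Type*} [Field K] (b c : K) (hΔ : (Ebc b c).Δ ≠ 0) :
    (∃ h : (Ebc b c).Nonsingular b (b * c),
      2 • P₀ b c hΔ = WeierstrassCurve.Affine.Point.some _ _ h) ∧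
    (∃ h : (Ebc b c).Nonsingular c (b - c),
      3 • P₀ b c hΔ = WeierstrassCurve.Affine.Point.some _ _ h) := by
  set W := Ebc b c with hW
  have h0 : W.Nonsingular 0 0 := (W.equation_iff_nonsingular_of_Δ_ne_zero hΔ).mp (W.equation_zero.mpr rfl)
  have hb : b ≠ 0 := by
    rcases (W.nonsingular_iff 0 0).mp h0 with ⟨-, h | h⟩ <;> simp [hW, Ebc] at h
    exact fun e => h e.symm
  -- slope for doubling is 0
  have hy0 : (0 : K) ≠ W.negY 0 0 := by
    simp only [WeierstrassCurve.Affine.negY, hW, Ebc]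
    simpa using fun e => hb e.symm
  have hL : W.slope 0 0 0 0 = 0 := by
    rw [WeierstrassCurve.Affine.slope_of_Y_ne rfl hy0]
    simp [hW, Ebc]
  have hX2 : W.addX 0 0 (W.slope 0 0 0 0) = b := by
    simp only [WeierstrassCurve.Affine.addX]; rw [hL]; simp [hW, Ebc]
  have hY2 : W.addY 0 0 0 (W.slope 0 0 0 0) = b * c := by
    simp only [WeierstrassCurve.Affine.addY, WeierstrassCurve.Affine.negAddY,
      WeierstrassCurve.Affine.addX, WeierstrassCurve.Affine.negY]
    rw [hL]; simp only [hW, Ebc]; ring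
  have h2 : W.Nonsingular b (b * c) := by
    have := WeierstrassCurve.Affine.nonsingular_add h0 h0 (fun h => hy0 h.2)
    rwa [hX2, hY2] at this
  have key2 : 2 • P₀ b c hΔ = WeierstrassCurve.Affine.Point.some _ _ h2 := by
    rw [two_smul]
    show WeierstrassCurve.Affine.Point.some _ _ h0 + .some _ _ h0 = _
    rw [WeierstrassCurve.Affine.Point.add_of_Y_ne hy0]
    exact some_congr hX2 hY2
  -- 3P = 2P + P
  have hx23 : b ≠ (0 : K) := hb
  have hL3 : W.slope b 0 (b * c) 0 = c := by
    rw [WeierstrassCurve.Affine.slope_of_X_ne hx23]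
    field_simp
    ring
  have hX3 : W.addX b 0 (W.slope b 0 (b * c) 0) = c := by
    simp only [WeierstrassCurve.Affine.addX]; rw [hL3]; simp only [hW, Ebc]; ring
  have hY3 : W.addY b 0 (b * c) (W.slope b 0 (b * c) 0) = b - c := by
    simp only [WeierstrassCurve.Affine.addY, WeierstrassCurve.Affine.negAddY,
      WeierstrassCurve.Affine.addX, WeierstrassCurve.Affine.negY]
    rw [hL3]; simp only [hW, Ebc]; ring
  have h3 : W.Nonsingular c (b - c) := by
    have := WeierstrassCurve.Affine.nonsingular_add h2 h0 (fun h => absurd h.1 hx23)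
    rwa [hX3, hY3] at this
  have key3 : 3 • P₀ b c hΔ = WeierstrassCurve.Affine.Point.some _ _ h3 := by
    rw [show (3 : ℕ) = 2 + 1 from rfl, succ_nsmul, key2]
    show WeierstrassCurve.Affine.Point.some _ _ h2 + .some _ _ h0 = _
    rw [WeierstrassCurve.Affine.Point.add_of_X_ne hx23]
    exact some_congr hX3 hY3
  exact ⟨⟨h2, key2⟩, ⟨h3, key3⟩⟩
end

section
/- Let K be a field and b, c ∈ K such that the Kubert-Tate curve E(b,c) has nonzero discriminant. Then the point (0,0) on E(b,c) has order exactly 4 if and only if c = 0. -/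
lemma some_eq_some {K : Type*} [CommRing K] {W : WeierstrassCurve.Affine K}
    {x y x' y' : K} (h : W.Nonsingular x y) (h' : W.Nonsingular x' y')
    (hx : x = x') (hy : y = y') :
    WeierstrassCurve.Affine.Point.some _ _ h = WeierstrassCurve.Affine.Point.some _ _ h' := by
  subst hx hy; rfl

lemma Ebc_b_ne_zero {K : Type*} [Field K] {b c : K} (hΔ : (Ebc b c).Δ ≠ 0) : b ≠ 0 := by
  intro h
  apply hΔ
  subst h
  simp [Ebc, WeierstrassCurve.Δ, WeierstrassCurve.b₂, WeierstrassCurve.b₄,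
    WeierstrassCurve.b₆, WeierstrassCurve.b₈]

open Classical in
theorem stmt_5 {K : Type*} [Field K] (b c : K) (hΔ : (Ebc b c).Δ ≠ 0) :
    addOrderOf (P₀ b c hΔ) = 4 ↔ c = 0 := by
  have hb : b ≠ 0 := Ebc_b_ne_zero hΔ
  set W := Ebc b c with hW
  have ha₁ : W.a₁ = 1 - c := rfl
  have ha₂ : W.a₂ = -b := rfl
  have ha₃ : W.a₃ = -b := rfl
  have ha₄ : W.a₄ = (0 : K) := rfl
  have ha₆ : W.a₆ = (0 : K) := rfl
  -- (0,0) is not 2-torsion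
  have hy0 : (0 : K) ≠ W.negY 0 0 := by
    simp only [WeierstrassCurve.Affine.negY, ha₁, ha₃]
    intro h; apply hb; simpa using h.symm
  -- 2P = (b, b*c)
  have h2 : W.Nonsingular b (b * c) := by
    apply (W.equation_iff_nonsingular_of_Δ_ne_zero hΔ).mp
    rw [WeierstrassCurve.Affine.equation_iff, ha₁, ha₂, ha₃, ha₄, ha₆]
    ring
  have hslope : W.slope 0 0 0 0 = 0 := by
    rw [WeierstrassCurve.Affine.slope_of_Y_ne rfl hy0, ha₂, ha₄, ha₁]
    simp
  have h2P : P₀ b c hΔ + P₀ b c hΔ = WeierstrassCurve.Affine.Point.some _ _ h2 := by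
    rw [P₀, WeierstrassCurve.Affine.Point.add_self_of_Y_ne hy0]
    apply some_eq_some
    · rw [WeierstrassCurve.Affine.addX, hslope, ha₁, ha₂]; ring
    · rw [WeierstrassCurve.Affine.addY, WeierstrassCurve.Affine.negY,
        WeierstrassCurve.Affine.negAddY, hslope, WeierstrassCurve.Affine.addX,
        ha₁, ha₂, ha₃]
      ring
  have hnegY2 : W.negY b (b * c) = 0 := by
    rw [WeierstrassCurve.Affine.negY, ha₁, ha₃]; ring
  have h2nsmul : (2 : ℕ) • P₀ b c hΔ = WeierstrassCurve.Affine.Point.some _ _ h2 := by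
    rw [two_nsmul, h2P]
  have h4nsmul : (4 : ℕ) • P₀ b c hΔ =
      WeierstrassCurve.Affine.Point.some _ _ h2 + WeierstrassCurve.Affine.Point.some _ _ h2 := by
    have : (4 : ℕ) • P₀ b c hΔ = (2 : ℕ) • ((2 : ℕ) • P₀ b c hΔ) := by
      rw [← mul_nsmul]
    rw [this, h2nsmul, two_nsmul]
  constructor
  · intro hord
    have h4 : (4 : ℕ) • P₀ b c hΔ = 0 := by
      rw [← hord]; exact addOrderOf_nsmul_eq_zero _
    rw [h4nsmul] at h4
    by_contra hc
    have hbc : b * c ≠ W.negY b (b * c) := by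
      rw [hnegY2]; exact mul_ne_zero hb hc
    rw [WeierstrassCurve.Affine.Point.add_self_of_Y_ne hbc] at h4
    exact WeierstrassCurve.Affine.Point.some_ne_zero _ h4
  · intro hc
    have h4 : (4 : ℕ) • P₀ b c hΔ = 0 := by
      rw [h4nsmul]
      exact WeierstrassCurve.Affine.Point.add_self_of_Y_eq (by rw [hnegY2, hc, mul_zero])
    have h2ne : (2 : ℕ) • P₀ b c hΔ ≠ 0 := by
      rw [h2nsmul]
      exact WeierstrassCurve.Affine.Point.some_ne_zero _
    have : Fact (Nat.Prime 2) := ⟨Nat.prime_two⟩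
    have := addOrderOf_eq_prime_pow (p := 2) (n := 1) (x := P₀ b c hΔ)
      (by simpa using h2ne) (by simpa using h4)
    simpa using this
end

section
/- Let K = ℚ(ζ₃) be the third cyclotomic field with ζ₃ a primitive third root of unity. The Kubert-Tate curve E(ζ₃, −1) over K, given by y² + 2xy − ζ₃y = x³ − ζ₃x², is an elliptic curve (its discriminant is nonzero) and the point (0,0) on it has order exactly 7. -/
open WeierstrassCurve.Affine WeierstrassCurve.Affine.Point

private lemma some_eq_some' {K : Type*} [Field K] {W : WeierstrassCurve.Affine K}
    {x₁ y₁ x₂ y₂ : K} (hx : x₁ = x₂) (hy : y₁ = y₂) (h₁ : W.Nonsingular x₁ y₁)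
    (h₂ : W.Nonsingular x₂ y₂) :
    WeierstrassCurve.Affine.Point.some _ _ h₁ = WeierstrassCurve.Affine.Point.some _ _ h₂ := by
  subst hx; subst hy; rfl

open Classical in
theorem stmt_10 (ζ : CyclotomicField 3 ℚ) (hζ : IsPrimitiveRoot ζ 3) :
    (Ebc ζ (-1)).Δ ≠ 0 ∧
    ∃ h : (Ebc ζ (-1)).Nonsingular 0 0,
      addOrderOf (WeierstrassCurve.Affine.Point.some _ _ h) = 7 := by
  have hz3 : ζ ^ 3 = 1 := hζ.pow_eq_one
  have hz1 : ζ ≠ 1 := hζ.ne_one (by norm_num)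
  have hq : ζ ^ 2 + ζ + 1 = 0 := by
    have h : (ζ - 1) * (ζ ^ 2 + ζ + 1) = 0 := by linear_combination hz3
    rcases mul_eq_zero.mp h with h | h
    · exact absurd (sub_eq_zero.mp h) hz1
    · exact h
  have hz0 : ζ ≠ 0 := hζ.ne_zero (by norm_num)
  set W : WeierstrassCurve.Affine (CyclotomicField 3 ℚ) := Ebc ζ (-1) with hW
  have ha₁ : W.a₁ = 2 := by show 1 - (-1) = 2; ring
  have ha₂ : W.a₂ = -ζ := rfl
  have ha₃ : W.a₃ = -ζ := rfl
  have ha₄ : W.a₄ = 0 := rfl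
  have ha₆ : W.a₆ = 0 := rfl
  have hΔ : W.Δ ≠ 0 := by
    have hΔval : W.Δ = -3 * ζ - 8 := by
      simp only [WeierstrassCurve.Δ, WeierstrassCurve.b₂, WeierstrassCurve.b₄,
        WeierstrassCurve.b₆, WeierstrassCurve.b₈, ha₁, ha₂, ha₃, ha₄, ha₆]
      linear_combination (16 * ζ ^ 3 - 3 * ζ ^ 2 - 5 * ζ + 8) * hq
    rw [hΔval]
    intro h
    have hz : 3 * ζ + 8 = 0 := by linear_combination -h
    have h49 : (49 : CyclotomicField 3 ℚ) = 0 := by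
      linear_combination 9 * hq + (8 - 3 * ζ) * hz - 3 * hz
    norm_num at h49
  refine ⟨hΔ, ?_⟩
  have h0 : W.Nonsingular 0 0 := by
    rw [nonsingular_iff, equation_iff, ha₁, ha₂, ha₃, ha₄, ha₆]
    exact ⟨by ring, Or.inr fun h => hz0 (by linear_combination -h)⟩
  refine ⟨h0, ?_⟩
  have hA : W.Nonsingular ζ (-ζ) := by
    rw [nonsingular_iff, equation_iff, ha₁, ha₂, ha₃, ha₄, ha₆]
    exact ⟨by ring, Or.inr fun h => hz0 (by linear_combination -h)⟩
  have hB : W.Nonsingular (-1) (ζ + 1) := by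
    rw [nonsingular_iff, equation_iff, ha₁, ha₂, ha₃, ha₄, ha₆]
    refine ⟨by linear_combination hq - hq, Or.inr fun h => ?_⟩
    exact hz0 (by linear_combination h)
  have hC : W.Nonsingular (-1) 1 := by
    rw [nonsingular_iff, equation_iff, ha₁, ha₂, ha₃, ha₄, ha₆]
    exact ⟨by ring, Or.inr fun h => hz0 (by linear_combination -h)⟩
  set P : W.Point := WeierstrassCurve.Affine.Point.some _ _ h0 with hP
  have hy₀ : (0 : CyclotomicField 3 ℚ) ≠ W.negY 0 0 := by
    rw [negY, ha₁, ha₃]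
    exact fun h => hz0 (by linear_combination -h)
  have e2 : P + P = WeierstrassCurve.Affine.Point.some _ _ hA := by
    rw [hP, add_of_Y_ne hy₀]
    refine some_eq_some' ?_ ?_ _ _
    · rw [addX, slope_of_Y_ne rfl hy₀, negY, ha₁, ha₂, ha₃, ha₄]
      simp
    · rw [addY, negAddY, negY, addX, slope_of_Y_ne rfl hy₀, negY, ha₁, ha₂, ha₃, ha₄]
      field_simp
      ring
  have hxA : (ζ : CyclotomicField 3 ℚ) ≠ 0 := hz0
  have e3 : WeierstrassCurve.Affine.Point.some _ _ hA + P = WeierstrassCurve.Affine.Point.some _ _ hB := by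
    rw [hP, add_of_X_ne hxA]
    refine some_eq_some' ?_ ?_ _ _
    · rw [addX, slope_of_X_ne hxA, ha₁, ha₂]
      field_simp
      linear_combination (0:CyclotomicField 3 ℚ) * hq
    · rw [addY, negAddY, negY, addX, slope_of_X_ne hxA, ha₁, ha₂, ha₃]
      field_simp
      linear_combination (0:CyclotomicField 3 ℚ) * hq
  have hyA : (-ζ : CyclotomicField 3 ℚ) ≠ W.negY ζ (-ζ) := by
    rw [negY, ha₁, ha₃]
    exact fun h => hz0 (by linear_combination -h)
  have hinv : ζ⁻¹ = ζ ^ 2 :=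
    (eq_inv_of_mul_eq_one_left (show ζ ^ 2 * ζ = 1 by linear_combination hz3)).symm
  have e4 : WeierstrassCurve.Affine.Point.some _ _ hA + WeierstrassCurve.Affine.Point.some _ _ hA =
      WeierstrassCurve.Affine.Point.some _ _ hC := by
    rw [add_of_Y_ne hyA]
    refine some_eq_some' ?_ ?_ _ _
    · rw [addX, slope_of_Y_ne rfl hyA, negY, ha₁, ha₂, ha₃, ha₄]
      ring_nf
      field_simp [hz0]
      linear_combination hq
    · rw [addY, negAddY, negY, addX, slope_of_Y_ne rfl hyA, negY, ha₁, ha₂, ha₃, ha₄]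
      ring_nf
      field_simp [hz0]
      have hD : (ζ * ζ ^ 2 * ζ ^ 2 * ζ ^ 3 * ζ ^ 3 : CyclotomicField 3 ℚ) ≠ 0 := by
        simp [hz0]
      linear_combination hz3
  have e7 : WeierstrassCurve.Affine.Point.some _ _ hC + WeierstrassCurve.Affine.Point.some _ _ hB =
      (0 : W.Point) := by
    refine add_of_Y_eq rfl ?_
    rw [negY, ha₁, ha₃]
    ring
  have h7 : (7 : ℕ) • P = 0 := by
    have key : (7 : ℕ) • P = (P + P + (P + P)) + (P + P + P) := by abel
    rw [key, e2, e4, e3, e7]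
  have hP0 : P ≠ 0 := by
    rw [hP]
    exact fun h => by cases h
  haveI : Fact (Nat.Prime 7) := ⟨by norm_num⟩
  exact addOrderOf_eq_prime h7 hP0
end
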